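/- arXiv:2309.03585 — 4 statements merged into one kernel-verified Lean document; each statement's English description precedes it below -/
import Mathlib

section
/- The curve Y(t) = Q exp(tA)[I_p;0] (with Q ∈ O(n), A = [[Ω,−Kᵀ],[K,0]] skew-symmetric) satisfies the geodesic ODE of the Stiefel manifold with the canonical metric: Ÿ + ẎẎᵀY + Y((YᵀẎ)² + ẎᵀẎ) = 0. -/
open Matrix NormedSpace

attribute [local instance] Matrix.frobeniusNormedAddCommGroup Matrix.frobeniusNormedSpace

/-- The Stiefel geodesic `Y(t) = Q exp(tA) [I_p; 0]` with `Q = [Y₀ Y₀⊥]` and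
`A = [[Ω, −Kᵀ],[K, 0]]`. -/
noncomputable def stiefelGeodesic {n p : ℕ} (Y₀ : Matrix (Fin n) (Fin p) ℝ)
    (Y₀perp : Matrix (Fin n) (Fin (n - p)) ℝ)
    (Ω : Matrix (Fin p) (Fin p) ℝ) (K : Matrix (Fin (n - p)) (Fin p) ℝ) (t : ℝ) :
    Matrix (Fin n) (Fin p) ℝ :=
  fromCols Y₀ Y₀perp * exp (t • fromBlocks Ω (-Kᵀ) K 0) *
    fromRows (1 : Matrix (Fin p) (Fin p) ℝ) (0 : Matrix (Fin (n - p)) (Fin p) ℝ)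

section Aux

attribute [local instance] Matrix.frobeniusNormedRing Matrix.frobeniusNormedAlgebra

/-- The continuous linear map `X ↦ Q * X * J`. -/
noncomputable def stiefelAuxCLM {l m m' o : Type*} [Fintype l] [Fintype m] [Fintype m']
    [Fintype o] (Q : Matrix l m ℝ) (J : Matrix m' o ℝ) :
    Matrix m m' ℝ →L[ℝ] Matrix l o ℝ :=
  LinearMap.toContinuousLinearMap
    { toFun := fun X => Q * X * J
      map_add' := fun X Y => by show Q * (X + Y) * J = _; rw [Matrix.mul_add, Matrix.add_mul]
      map_smul' := fun c X => by
        simp only [Matrix.mul_smul, Matrix.smul_mul, RingHom.id_apply] }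

lemma stiefelAuxCLM_apply {l m m' o : Type*} [Fintype l] [Fintype m] [Fintype m']
    [Fintype o] (Q : Matrix l m ℝ) (J : Matrix m' o ℝ) (X : Matrix m m' ℝ) :
    stiefelAuxCLM Q J X = Q * X * J := rfl

lemma stiefelGeodesic_hasDerivAt {n p : ℕ} (Y₀ : Matrix (Fin n) (Fin p) ℝ)
    (Y₀perp : Matrix (Fin n) (Fin (n - p)) ℝ)
    (Ω : Matrix (Fin p) (Fin p) ℝ) (K : Matrix (Fin (n - p)) (Fin p) ℝ) (s : ℝ) :
    HasDerivAt (stiefelGeodesic Y₀ Y₀perp Ω K)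
      (fromCols Y₀ Y₀perp * (exp (s • fromBlocks Ω (-Kᵀ) K 0) * fromBlocks Ω (-Kᵀ) K 0) *
        fromRows (1 : Matrix (Fin p) (Fin p) ℝ) 0) s := by
  have h1 := hasDerivAt_exp_smul_const (𝕂 := ℝ) (fromBlocks Ω (-Kᵀ) K (0 : Matrix (Fin (n - p)) (Fin (n - p)) ℝ)) s
  have h2 := (stiefelAuxCLM (fromCols Y₀ Y₀perp)
      (fromRows (1 : Matrix (Fin p) (Fin p) ℝ) (0 : Matrix (Fin (n - p)) (Fin p) ℝ))).hasFDerivAt.comp_hasDerivAt s h1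
  exact h2

lemma stiefelGeodesic_hasDerivAt2 {n p : ℕ} (Y₀ : Matrix (Fin n) (Fin p) ℝ)
    (Y₀perp : Matrix (Fin n) (Fin (n - p)) ℝ)
    (Ω : Matrix (Fin p) (Fin p) ℝ) (K : Matrix (Fin (n - p)) (Fin p) ℝ) (s : ℝ) :
    HasDerivAt (fun u : ℝ => (fromCols Y₀ Y₀perp *
        (exp (u • fromBlocks Ω (-Kᵀ) K 0) * fromBlocks Ω (-Kᵀ) K 0) *
        fromRows (1 : Matrix (Fin p) (Fin p) ℝ) 0 : Matrix (Fin n) (Fin p) ℝ))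
      (fromCols Y₀ Y₀perp *
        (exp (s • fromBlocks Ω (-Kᵀ) K 0) * fromBlocks Ω (-Kᵀ) K 0 * fromBlocks Ω (-Kᵀ) K 0) *
        fromRows (1 : Matrix (Fin p) (Fin p) ℝ) 0) s := by
  have h1 := (hasDerivAt_exp_smul_const (𝕂 := ℝ)
      (fromBlocks Ω (-Kᵀ) K (0 : Matrix (Fin (n - p)) (Fin (n - p)) ℝ)) s).mul_const
      (fromBlocks Ω (-Kᵀ) K (0 : Matrix (Fin (n - p)) (Fin (n - p)) ℝ))
  have h2 := (stiefelAuxCLM (fromCols Y₀ Y₀perp)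
      (fromRows (1 : Matrix (Fin p) (Fin p) ℝ) (0 : Matrix (Fin (n - p)) (Fin p) ℝ))).hasFDerivAt.comp_hasDerivAt s h1
  exact h2

end Aux

/-- The curve `Y(t) = Q exp(tA) [I_p; 0]` satisfies the geodesic ODE of the Stiefel
manifold with the canonical metric: `Ÿ + ẎẎᵀY + Y((YᵀẎ)² + ẎᵀẎ) = 0`. -/
theorem stiefelGeodesic_ode {n p : ℕ} (Y₀ : Matrix (Fin n) (Fin p) ℝ)
    (Y₀perp : Matrix (Fin n) (Fin (n - p)) ℝ)
    (hQ : (fromCols Y₀ Y₀perp)ᵀ * fromCols Y₀ Y₀perp = 1)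
    (hQ' : fromCols Y₀ Y₀perp * (fromCols Y₀ Y₀perp)ᵀ = 1)
    (Ω : Matrix (Fin p) (Fin p) ℝ) (hΩ : Ωᵀ = -Ω)
    (K : Matrix (Fin (n - p)) (Fin p) ℝ)
    (Yd Ydd : ℝ → Matrix (Fin n) (Fin p) ℝ)
    (hYd : ∀ t : ℝ, HasDerivAt (stiefelGeodesic Y₀ Y₀perp Ω K) (Yd t) t)
    (hYdd : ∀ t : ℝ, HasDerivAt Yd (Ydd t) t) :
    ∀ t : ℝ,
      Ydd t + Yd t * (Yd t)ᵀ * stiefelGeodesic Y₀ Y₀perp Ω K t +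
        stiefelGeodesic Y₀ Y₀perp Ω K t *
          (((stiefelGeodesic Y₀ Y₀perp Ω K t)ᵀ * Yd t) ^ 2 + (Yd t)ᵀ * Yd t) = 0 := by
  intro t
  set Q : Matrix (Fin n) (Fin p ⊕ Fin (n - p)) ℝ := fromCols Y₀ Y₀perp with hQdef
  set A : Matrix (Fin p ⊕ Fin (n - p)) (Fin p ⊕ Fin (n - p)) ℝ := fromBlocks Ω (-Kᵀ) K 0
    with hAdef
  set J : Matrix (Fin p ⊕ Fin (n - p)) (Fin p) ℝ := fromRows 1 0 with hJdef
  set E : Matrix (Fin p ⊕ Fin (n - p)) (Fin p ⊕ Fin (n - p)) ℝ := exp (t • A) with hEdef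
  -- Identify the derivatives
  have hYdEq : Yd = fun s : ℝ => Q * (exp (s • A) * A) * J :=
    funext fun s => (hYd s).unique (stiefelGeodesic_hasDerivAt Y₀ Y₀perp Ω K s)
  have hYddEq : Ydd t = Q * (E * A * A) * J := by
    refine (hYdd t).unique ?_
    rw [hYdEq]
    exact stiefelGeodesic_hasDerivAt2 Y₀ Y₀perp Ω K t
  have hYt : stiefelGeodesic Y₀ Y₀perp Ω K t = Q * E * J := rfl
  have hYdt : Yd t = Q * (E * A) * J := by rw [hYdEq]
  -- skew-symmetry of A and orthogonality of E
  have hAT : Aᵀ = -A := by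
    rw [hAdef, Matrix.fromBlocks_transpose, hΩ, Matrix.fromBlocks_neg,
      Matrix.transpose_neg, Matrix.transpose_transpose, Matrix.transpose_zero, neg_neg, neg_zero]
  have hEE : Eᵀ * E = 1 := by
    have hsT : (t • A)ᵀ = -(t • A) := by rw [Matrix.transpose_smul, hAT, smul_neg]
    rw [hEdef, ← Matrix.exp_transpose, hsT,
      ← Matrix.exp_add_of_commute (-(t • A)) (t • A) (Commute.neg_left (Commute.refl _)),
      neg_add_cancel, exp_zero]
  -- cancellation helpers
  have cQ : ∀ Z : Matrix (Fin p ⊕ Fin (n - p)) (Fin p) ℝ, Qᵀ * (Q * Z) = Z := fun Z => by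
    rw [← Matrix.mul_assoc, hQ, Matrix.one_mul]
  have cE : ∀ Z : Matrix (Fin p ⊕ Fin (n - p)) (Fin p) ℝ, Eᵀ * (E * Z) = Z := fun Z => by
    rw [← Matrix.mul_assoc, hEE, Matrix.one_mul]
  -- block computations
  have hAJ : A * J = fromRows Ω K := by
    rw [hAdef, hJdef, fromBlocks_mul_fromRows]; simp
  have hJT : Jᵀ = fromCols 1 0 := by
    rw [hJdef, transpose_fromRows, Matrix.transpose_one, Matrix.transpose_zero]
  have hJAJ : Jᵀ * (A * J) = Ω := by
    rw [hAJ, hJT, fromCols_mul_fromRows]; simp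
  have hAAJ : A * (A * J) = fromRows (Ω * Ω + -Kᵀ * K) (K * Ω) := by
    rw [hAJ, hAdef, fromBlocks_mul_fromRows]; simp
  have hJAAJ : Jᵀ * (A * (A * J)) = Ω * Ω + -Kᵀ * K := by
    rw [hAAJ, hJT, fromCols_mul_fromRows]; simp
  have hAJΩ : A * (J * Ω) = fromRows (Ω * Ω) (K * Ω) := by
    have : J * Ω = fromRows Ω 0 := by rw [hJdef, fromRows_mul]; simp
    rw [this, hAdef, fromBlocks_mul_fromRows]; simp
  have hJfin : J * (Ω ^ 2 + -(Ω * Ω + -(Kᵀ * K))) = fromRows (Kᵀ * K) 0 := by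
    have h : Ω ^ 2 + -(Ω * Ω + -(Kᵀ * K)) = Kᵀ * K := by
      rw [pow_two, neg_add, neg_neg]; abel
    rw [h, hJdef, fromRows_mul]; simp
  rw [hYt, hYdt, hYddEq]
  simp only [Matrix.transpose_mul, Matrix.mul_assoc, cQ, cE, hAT, Matrix.neg_mul,
    Matrix.mul_neg, hJAJ, hJAAJ]
  have comb : ∀ X1 X2 X3 : Matrix (Fin p ⊕ Fin (n - p)) (Fin p) ℝ,
      X1 + -X2 + X3 = 0 → Q * (E * X1) + -(Q * (E * X2)) + Q * (E * X3) = 0 := by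
    intro X1 X2 X3 h
    have h2 : Q * (E * (X1 + -X2 + X3)) = 0 := by rw [h, Matrix.mul_zero, Matrix.mul_zero]
    rw [← h2]; simp only [Matrix.mul_add, Matrix.mul_neg]
  rw [hAAJ, hAJΩ, hJfin]
  refine comb _ _ _ ?_
  ext (i | i) j <;> simp [Matrix.neg_mul, Matrix.fromRows_apply_inl, Matrix.fromRows_apply_inr] <;> ring
end

section
/- Let K ∈ ℝ^{(n-p)×p} with n ≥ 2p, and let K = QR be a QR factorization with Q ∈ ℝ^{(n-p)×p} orthonormal and R ∈ ℝ^{p×p}. Let Y₀ ∈ St(n,p) with orthonormal complement Y₀⊥, and Ω ∈ ℝ^{p×p} skew-symmetric. Then [Y₀ Y₀⊥] exp([[Ω,−Kᵀ],[K,0_{n-p}]]) [I_p; 0_{(n-p)×p}] = [Y₀ Y₀⊥Q] exp([[Ω,−Rᵀ],[R,0_p]]) [I_p; 0_p]. -/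
open Matrix NormedSpace

/-- If `A * U = U * B` then the exponentials intertwine: `exp A * U = U * exp B`. -/
theorem exp_intertwine_aux {m k : Type*} [Fintype m] [DecidableEq m] [Fintype k] [DecidableEq k]
    (A : Matrix m m ℝ) (B : Matrix k k ℝ) (U : Matrix m k ℝ) (h : A * U = U * B) :
    NormedSpace.exp A * U = U * NormedSpace.exp B := by
  letI : SeminormedRing (Matrix m m ℝ) := Matrix.linftyOpSemiNormedRing
  letI : NormedRing (Matrix m m ℝ) := Matrix.linftyOpNormedRing
  letI : NormedAlgebra ℝ (Matrix m m ℝ) := Matrix.linftyOpNormedAlgebra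
  letI : SeminormedRing (Matrix k k ℝ) := Matrix.linftyOpSemiNormedRing
  letI : NormedRing (Matrix k k ℝ) := Matrix.linftyOpNormedRing
  letI : NormedAlgebra ℝ (Matrix k k ℝ) := Matrix.linftyOpNormedAlgebra
  have hpow : ∀ j : ℕ, A ^ j * U = U * B ^ j := by
    intro j
    induction j with
    | zero => simp
    | succ j ih =>
      rw [pow_succ, pow_succ, Matrix.mul_assoc, h, ← Matrix.mul_assoc, ih, Matrix.mul_assoc]
  have hA : Summable fun j : ℕ => ((j.factorial : ℝ))⁻¹ • A ^ j := expSeries_summable' A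
  have hB : Summable fun j : ℕ => ((j.factorial : ℝ))⁻¹ • B ^ j := expSeries_summable' B
  let L : Matrix m m ℝ →L[ℝ] Matrix m k ℝ :=
    { toFun := fun X => X * U
      map_add' := fun X Y => Matrix.add_mul X Y U
      map_smul' := fun c X => Matrix.smul_mul c X U
      cont := continuous_id.matrix_mul continuous_const }
  let M : Matrix k k ℝ →L[ℝ] Matrix m k ℝ :=
    { toFun := fun X => U * X
      map_add' := fun X Y => Matrix.mul_add U X Y
      map_smul' := fun c X => Matrix.mul_smul U c X
      cont := continuous_const.matrix_mul continuous_id }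
  have h1 : NormedSpace.exp A * U = ∑' j : ℕ, (((j.factorial : ℝ))⁻¹ • A ^ j) * U := by
    rw [exp_eq_tsum (𝕂 := ℝ)]
    exact L.map_tsum hA
  have h2 : U * NormedSpace.exp B = ∑' j : ℕ, U * (((j.factorial : ℝ))⁻¹ • B ^ j) := by
    rw [exp_eq_tsum (𝕂 := ℝ)]
    exact M.map_tsum hB
  rw [h1, h2]
  congr 1
  funext j
  rw [Matrix.smul_mul, Matrix.mul_smul, hpow]

/-- Reduction of the Stiefel geodesic formula from `St(n,p)` to `St(2p,p)`:
if `K = QR` is a QR factorization with `Q` orthonormal, then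
`[Y₀ Y₀⊥] exp([[Ω,−Kᵀ],[K,0]]) [I_p;0] = [Y₀ Y₀⊥Q] exp([[Ω,−Rᵀ],[R,0]]) [I_p;0]`. -/
theorem stiefel_smaller_formulation {n p : ℕ} (hnp : 2 * p ≤ n)
    (Y₀ : Matrix (Fin n) (Fin p) ℝ) (Y₀perp : Matrix (Fin n) (Fin (n - p)) ℝ)
    (hQorth : (fromCols Y₀ Y₀perp)ᵀ * fromCols Y₀ Y₀perp = 1)
    (hQorth' : fromCols Y₀ Y₀perp * (fromCols Y₀ Y₀perp)ᵀ = 1)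
    (Ω : Matrix (Fin p) (Fin p) ℝ) (hΩ : Ωᵀ = -Ω)
    (K : Matrix (Fin (n - p)) (Fin p) ℝ)
    (Q : Matrix (Fin (n - p)) (Fin p) ℝ) (R : Matrix (Fin p) (Fin p) ℝ)
    (hQ : Qᵀ * Q = 1) (hKQR : K = Q * R) :
    fromCols Y₀ Y₀perp *
        NormedSpace.exp (fromBlocks Ω (-Kᵀ) K (0 : Matrix (Fin (n - p)) (Fin (n - p)) ℝ)) *
        fromRows (1 : Matrix (Fin p) (Fin p) ℝ) (0 : Matrix (Fin (n - p)) (Fin p) ℝ)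
      = fromCols Y₀ (Y₀perp * Q) *
          NormedSpace.exp (fromBlocks Ω (-Rᵀ) R (0 : Matrix (Fin p) (Fin p) ℝ)) *
          fromRows (1 : Matrix (Fin p) (Fin p) ℝ) (0 : Matrix (Fin p) (Fin p) ℝ) := by
  set A := fromBlocks Ω (-Kᵀ) K (0 : Matrix (Fin (n - p)) (Fin (n - p)) ℝ) with hA
  set B := fromBlocks Ω (-Rᵀ) R (0 : Matrix (Fin p) (Fin p) ℝ) with hB
  set U := fromBlocks (1 : Matrix (Fin p) (Fin p) ℝ) 0 0 Q with hU
  have hint : A * U = U * B := by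
    rw [hA, hB, hU, fromBlocks_multiply, fromBlocks_multiply]
    simp [hKQR, transpose_mul, Matrix.mul_assoc, hQ]
  have hrows : U * fromRows (1 : Matrix (Fin p) (Fin p) ℝ) (0 : Matrix (Fin p) (Fin p) ℝ)
      = fromRows (1 : Matrix (Fin p) (Fin p) ℝ) (0 : Matrix (Fin (n - p)) (Fin p) ℝ) := by
    rw [hU, fromBlocks_mul_fromRows]
    simp
  have hcols : fromCols Y₀ Y₀perp * U = fromCols Y₀ (Y₀perp * Q) := by
    rw [hU, fromCols_mul_fromBlocks]
    simp
  calc fromCols Y₀ Y₀perp * NormedSpace.exp A *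
        fromRows (1 : Matrix (Fin p) (Fin p) ℝ) (0 : Matrix (Fin (n - p)) (Fin p) ℝ)
      = fromCols Y₀ Y₀perp * (NormedSpace.exp A * U) *
        fromRows (1 : Matrix (Fin p) (Fin p) ℝ) (0 : Matrix (Fin p) (Fin p) ℝ) := by
        rw [Matrix.mul_assoc, Matrix.mul_assoc, Matrix.mul_assoc, hrows]
    _ = fromCols Y₀ (Y₀perp * Q) * NormedSpace.exp B *
        fromRows (1 : Matrix (Fin p) (Fin p) ℝ) (0 : Matrix (Fin p) (Fin p) ℝ) := by
        rw [exp_intertwine_aux A B U hint, ← Matrix.mul_assoc, hcols]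
end

section
/- Let Y₀, Y₀⊥ be such that [Y₀ Y₀⊥] is orthogonal, let M be any invertible (n−p)×(n−p) matrix, and let A = [[Ω,−Kᵀ],[K,0]]. Then [Y₀ Y₀⊥] exp(tA) [I_p;0] = [Y₀ Y₀⊥M⁻¹] exp(t[[Ω, −KᵀM⁻¹],[MK, 0]]) [I_p;0] for all t. -/
open Matrix NormedSpace

/-- Freedom in the choice of the orthogonal complement in the Stiefel geodesic
formula: for any invertible `M`,
`[Y₀ Y₀⊥] exp(tA) [I_p;0] = [Y₀ Y₀⊥M⁻¹] exp(t[[Ω,−KᵀM⁻¹],[MK,0]]) [I_p;0]`. -/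
theorem stiefel_geodesic_basis_freedom {n p : ℕ}
    (Y₀ : Matrix (Fin n) (Fin p) ℝ) (Y₀perp : Matrix (Fin n) (Fin (n - p)) ℝ)
    (hQorth : (fromCols Y₀ Y₀perp)ᵀ * fromCols Y₀ Y₀perp = 1)
    (hQorth' : fromCols Y₀ Y₀perp * (fromCols Y₀ Y₀perp)ᵀ = 1)
    (Ω : Matrix (Fin p) (Fin p) ℝ) (hΩ : Ωᵀ = -Ω)
    (K : Matrix (Fin (n - p)) (Fin p) ℝ)
    (M : Matrix (Fin (n - p)) (Fin (n - p)) ℝ) (hM : IsUnit M) :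
    ∀ t : ℝ,
      fromCols Y₀ Y₀perp *
          exp (t • fromBlocks Ω (-Kᵀ) K (0 : Matrix (Fin (n - p)) (Fin (n - p)) ℝ)) *
          fromRows (1 : Matrix (Fin p) (Fin p) ℝ) (0 : Matrix (Fin (n - p)) (Fin p) ℝ)
        = fromCols Y₀ (Y₀perp * M⁻¹) *
            exp (t • fromBlocks Ω (-(Kᵀ * M⁻¹)) (M * K)
              (0 : Matrix (Fin (n - p)) (Fin (n - p)) ℝ)) *
            fromRows (1 : Matrix (Fin p) (Fin p) ℝ) (0 : Matrix (Fin (n - p)) (Fin p) ℝ) := by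
  intro t
  have hMd : IsUnit M.det := (Matrix.isUnit_iff_isUnit_det M).mp hM
  set S : Matrix (Fin p ⊕ Fin (n - p)) (Fin p ⊕ Fin (n - p)) ℝ :=
    fromBlocks 1 0 0 M with hS
  set S' : Matrix (Fin p ⊕ Fin (n - p)) (Fin p ⊕ Fin (n - p)) ℝ :=
    fromBlocks 1 0 0 M⁻¹ with hS'
  have hSS' : S * S' = 1 := by
    rw [hS, hS', fromBlocks_multiply]
    simp [Matrix.mul_nonsing_inv M hMd, fromBlocks_one]
  have hS'S : S' * S = 1 := by
    rw [hS, hS', fromBlocks_multiply]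
    simp [Matrix.nonsing_inv_mul M hMd, fromBlocks_one]
  have hSu : IsUnit S := isUnit_iff_exists.mpr ⟨S', hSS', hS'S⟩
  have hSinv : S⁻¹ = S' := inv_eq_right_inv hSS'
  have hconj : (t • fromBlocks Ω (-(Kᵀ * M⁻¹)) (M * K)
      (0 : Matrix (Fin (n - p)) (Fin (n - p)) ℝ))
      = S * (t • fromBlocks Ω (-Kᵀ) K 0) * S⁻¹ := by
    rw [hSinv, hS, hS', Matrix.mul_smul, Matrix.smul_mul, fromBlocks_multiply,
      fromBlocks_multiply]
    simp [Matrix.mul_assoc]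
  rw [hconj, Matrix.exp_conj S _ hSu, hSinv]
  have h1 : fromCols Y₀ (Y₀perp * M⁻¹) * S = fromCols Y₀ Y₀perp := by
    rw [hS, fromCols_mul_fromBlocks]
    simp [Matrix.mul_assoc, Matrix.nonsing_inv_mul M hMd]
  have h2 : S' * fromRows (1 : Matrix (Fin p) (Fin p) ℝ)
      (0 : Matrix (Fin (n - p)) (Fin p) ℝ) = fromRows 1 0 := by
    rw [hS', fromBlocks_mul_fromRows]
    simp
  conv_lhs => rw [← h1, ← h2]
  simp only [Matrix.mul_assoc]
end

section
/- For all real α with 0 ≤ α ≤ π, |sinc α| ≥ 1 − α/π, where sinc α = sin(α)/α for α ≠ 0 and sinc 0 = 1. -/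
lemma sin_ge_sub_cube' (x : ℝ) (hx : 0 ≤ x) : x - x ^ 3 / 6 ≤ Real.sin x := by
  have hmono : Monotone (fun x : ℝ => Real.sin x - (x - x ^ 3 / 6)) := by
    apply monotone_of_deriv_nonneg
    · fun_prop
    · intro t
      have h1 : HasDerivAt (fun x : ℝ => x ^ 3) (3 * t ^ 2) t := by
        simpa using hasDerivAt_pow 3 t
      have h2 : HasDerivAt (fun x : ℝ => x - x ^ 3 / 6) (1 - 3 * t ^ 2 / 6) t :=
        (hasDerivAt_id t).sub (h1.div_const 6)
      have h3 := (Real.hasDerivAt_sin t).sub h2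
      rw [show deriv (fun x : ℝ => Real.sin x - (x - x ^ 3 / 6)) t = Real.cos t - (1 - 3 * t ^ 2 / 6) from h3.deriv]
      have := Real.one_sub_sq_div_two_le_cos (x := t)
      linarith
  have h := hmono hx
  simpa using h

lemma key (x : ℝ) (hx : 0 ≤ x) (hx2 : x ≤ Real.pi / 2) :
    x * (Real.pi - x) ≤ Real.pi * Real.sin x := by
  have h1 := sin_ge_sub_cube' x hx
  have hπ : Real.pi < 3.15 := Real.pi_lt_d2
  have hπ0 : (0:ℝ) < Real.pi := Real.pi_pos
  have h6 : Real.pi * x ≤ 6 := by nlinarith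
  nlinarith [mul_nonneg (mul_nonneg hx hx) (by linarith : (0:ℝ) ≤ 6 - Real.pi * x),
    mul_le_mul_of_nonneg_left h1 hπ0.le]

/-- The unnormalized sinc function: `sinc x = sin x / x` for `x ≠ 0`, `sinc 0 = 1`. -/
noncomputable def sinc (x : ℝ) : ℝ := if x = 0 then 1 else Real.sin x / x

/-- For `0 ≤ α ≤ π`, `|sinc α| ≥ 1 − α/π`. -/
theorem abs_sinc_ge_linear (α : ℝ) (h0 : 0 ≤ α) (hπ : α ≤ Real.pi) :
    1 - α / Real.pi ≤ |sinc α| := by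
  have hπ0 : (0:ℝ) < Real.pi := Real.pi_pos
  rcases eq_or_lt_of_le h0 with rfl | hpos
  · simp [sinc]
  · have hα : α ≠ 0 := ne_of_gt hpos
    have hsin : 0 ≤ Real.sin α := Real.sin_nonneg_of_nonneg_of_le_pi h0 hπ
    have hs : sinc α = Real.sin α / α := by simp [sinc, hα]
    have hkey : α * (Real.pi - α) ≤ Real.pi * Real.sin α := by
      rcases le_or_gt α (Real.pi / 2) with h | h
      · exact key α h0 h
      · have h1 := key (Real.pi - α) (by linarith) (by linarith)
        rw [Real.sin_pi_sub] at h1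
        nlinarith [h1]
    rw [hs, abs_of_nonneg (div_nonneg hsin h0), le_div_iff₀ hpos]
    have : (1 - α / Real.pi) * α = α * (Real.pi - α) / Real.pi := by
      field_simp
    rw [this, div_le_iff₀ hπ0]
    linarith [hkey]
end
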